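/- Let U ⊆ ℝ² be open with coordinates (u,v) and let ρ, Λ, h : U → ℝ be smooth with ρ, Λ > 0, satisfying (log ρ)_u = −(2/Λ)h_u and (log ρ)_v = (2/Λ)h_v on U. Define φ := (1/2)√(Λ/ρ), k₁ := 2ρ/Λ, k₂ := −2ρ/Λ, Ω := −h, W := ρ, Ω₁ := −2√(ρ/Λ) h_u, and Ω₂ := −2√(ρ/Λ) h_v. Then the Ribaucour sphere-congruence system holds on U: (R1) Ω₁,v = Ω₂ φ_u/φ; (R2) Ω₂,u = Ω₁ φ_v/φ; (R3) Ω_u = φΩ₁; (R4) Ω_v = φΩ₂; (R5) W_u = Ω₁k₁φ; (R6) W_v = Ω₂k₂φ. (In the classification of conformal solutions of Cartan's problem, h plays the role of H/K and this shows that Ω = −H/K, W = ρ solve the Ribaucour system for the auxiliary minimal surface with I_m = (Λ/(4ρ))(du²+dv²), II_m = (1/2)(du²−dv²).) -/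

import Mathlib

/-- Partial derivative in the `u`-direction of a function on `ℝ²`. -/
noncomputable def pu (f : ℝ × ℝ → ℝ) (p : ℝ × ℝ) : ℝ := fderiv ℝ f p (1, 0)

/-- Partial derivative in the `v`-direction of a function on `ℝ²`. -/
noncomputable def pv (f : ℝ × ℝ → ℝ) (p : ℝ × ℝ) : ℝ := fderiv ℝ f p (0, 1)

lemma pu_congr {f g : ℝ × ℝ → ℝ} {p : ℝ × ℝ} (h : f =ᶠ[nhds p] g) : pu f p = pu g p := by
  simp only [pu, h.fderiv_eq]

lemma pv_congr {f g : ℝ × ℝ → ℝ} {p : ℝ × ℝ} (h : f =ᶠ[nhds p] g) : pv f p = pv g p := by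
  simp only [pv, h.fderiv_eq]

lemma pu_of_hasFDerivAt {f : ℝ × ℝ → ℝ} {L : (ℝ × ℝ) →L[ℝ] ℝ} {p : ℝ × ℝ}
    (h : HasFDerivAt f L p) : pu f p = L (1, 0) := by rw [pu, h.fderiv]

lemma pv_of_hasFDerivAt {f : ℝ × ℝ → ℝ} {L : (ℝ × ℝ) →L[ℝ] ℝ} {p : ℝ × ℝ}
    (h : HasFDerivAt f L p) : pv f p = L (0, 1) := by rw [pv, h.fderiv]

lemma mixed_exists {U : Set (ℝ × ℝ)} (hU : IsOpen U) {f : ℝ × ℝ → ℝ}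
    (hf : ContDiffOn ℝ (⊤ : ℕ∞) f U) {p : ℝ × ℝ} (hp : p ∈ U) :
    ∃ D1 D2 : (ℝ × ℝ) →L[ℝ] ℝ,
      HasFDerivAt (fun q => pu f q) D1 p ∧ HasFDerivAt (fun q => pv f q) D2 p ∧
      D1 (0, 1) = D2 (1, 0) := by
  have hmem : U ∈ nhds p := hU.mem_nhds hp
  have hf' : ContDiffAt ℝ (⊤ : ℕ∞) (fderiv ℝ f) p :=
    (hf.contDiffAt hmem).fderiv_right (m := ((⊤ : ℕ∞) : WithTop ℕ∞)) (by exact_mod_cast le_top)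
  have hd : HasFDerivAt (fderiv ℝ f) (fderiv ℝ (fderiv ℝ f) p) p :=
    (hf'.differentiableAt (by simp)).hasFDerivAt
  have hev : ∀ᶠ q in nhds p, HasFDerivAt f (fderiv ℝ f q) q := by
    filter_upwards [hmem] with q hq
    exact ((hf.contDiffAt (hU.mem_nhds hq)).differentiableAt (by simp)).hasFDerivAt
  have hsym := second_derivative_symmetric_of_eventually hev hd
  refine ⟨(ContinuousLinearMap.apply ℝ ℝ ((1:ℝ), (0:ℝ))).comp (fderiv ℝ (fderiv ℝ f) p),
      (ContinuousLinearMap.apply ℝ ℝ ((0:ℝ), (1:ℝ))).comp (fderiv ℝ (fderiv ℝ f) p), ?_, ?_, ?_⟩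
  · exact (ContinuousLinearMap.apply ℝ ℝ ((1:ℝ), (0:ℝ))).hasFDerivAt.comp p hd
  · exact (ContinuousLinearMap.apply ℝ ℝ ((0:ℝ), (1:ℝ))).hasFDerivAt.comp p hd
  · simpa using hsym (0, 1) (1, 0)

set_option maxHeartbeats 1600000 in
/-- let `ρ, Λ > 0` and `h` be smooth on the open set `U` with
`(log ρ)_u = -(2/Λ)h_u` and `(log ρ)_v = (2/Λ)h_v`. Then
`φ = (1/2)√(Λ/ρ)`, `k₁ = 2ρ/Λ`, `k₂ = -(2ρ/Λ)`, `Ω = -h`, `W = ρ`,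
`Ω₁ = -2√(ρ/Λ)h_u`, `Ω₂ = -2√(ρ/Λ)h_v` satisfy the Ribaucour sphere-congruence
system (R1)-(R6) on `U`. -/
theorem conformal_cartan_solution_solves_ribaucour_system
    (U : Set (ℝ × ℝ)) (hU : IsOpen U)
    (ρ Lam h : ℝ × ℝ → ℝ)
    (hρ : ContDiffOn ℝ (⊤ : ℕ∞) ρ U) (hLam : ContDiffOn ℝ (⊤ : ℕ∞) Lam U)
    (hh : ContDiffOn ℝ (⊤ : ℕ∞) h U)
    (hρpos : ∀ p ∈ U, 0 < ρ p) (hLampos : ∀ p ∈ U, 0 < Lam p)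
    (heq₁ : ∀ p ∈ U, pu (fun q => Real.log (ρ q)) p = -(2 / Lam p) * pu h p)
    (heq₂ : ∀ p ∈ U, pv (fun q => Real.log (ρ q)) p = (2 / Lam p) * pv h p)
    (φ k₁ k₂ Om Om₁ Om₂ W : ℝ × ℝ → ℝ)
    (hφ : ∀ p ∈ U, φ p = (1 / 2) * Real.sqrt (Lam p / ρ p))
    (hk₁ : ∀ p ∈ U, k₁ p = 2 * ρ p / Lam p)
    (hk₂ : ∀ p ∈ U, k₂ p = -(2 * ρ p / Lam p))
    (hOm : ∀ p ∈ U, Om p = -h p)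
    (hW : ∀ p ∈ U, W p = ρ p)
    (hOm₁ : ∀ p ∈ U, Om₁ p = -2 * Real.sqrt (ρ p / Lam p) * pu h p)
    (hOm₂ : ∀ p ∈ U, Om₂ p = -2 * Real.sqrt (ρ p / Lam p) * pv h p) :
    ∀ p ∈ U,
      pv Om₁ p = Om₂ p * (pu φ p / φ p) ∧
      pu Om₂ p = Om₁ p * (pv φ p / φ p) ∧
      pu Om p = φ p * Om₁ p ∧
      pv Om p = φ p * Om₂ p ∧
      pu W p = Om₁ p * k₁ p * φ p ∧
      pv W p = Om₂ p * k₂ p * φ p := by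
  intro p hp
  have hmem : U ∈ nhds p := hU.mem_nhds hp
  have hr : 0 < ρ p := hρpos p hp
  have hL : 0 < Lam p := hLampos p hp
  have hQpos : 0 < ρ p / Lam p := div_pos hr hL
  have hTpos : 0 < Lam p / ρ p := div_pos hL hr
  have dρ : HasFDerivAt ρ (fderiv ℝ ρ p) p :=
    ((hρ.contDiffAt hmem).differentiableAt (by simp)).hasFDerivAt
  have dΛ : HasFDerivAt Lam (fderiv ℝ Lam p) p :=
    ((hLam.contDiffAt hmem).differentiableAt (by simp)).hasFDerivAt
  have dh : HasFDerivAt h (fderiv ℝ h p) p :=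
    ((hh.contDiffAt hmem).differentiableAt (by simp)).hasFDerivAt
  obtain ⟨D1, D2, hD1, hD2, hDsym⟩ := mixed_exists hU hh hp
  have hlog : ContDiffOn ℝ (⊤ : ℕ∞) (fun q => Real.log (ρ q)) U :=
    hρ.log (fun q hq => (hρpos q hq).ne')
  obtain ⟨E1, E2, hE1, hE2, hEsym⟩ := mixed_exists hU hlog hp
  -- inverse derivatives
  have hinvL : HasFDerivAt (fun q => (Lam q)⁻¹) ((-(Lam p ^ 2)⁻¹) • fderiv ℝ Lam p) p :=
    (hasDerivAt_inv hL.ne').comp_hasFDerivAt p dΛ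
  have hinvρ : HasFDerivAt (fun q => (ρ q)⁻¹) ((-(ρ p ^ 2)⁻¹) • fderiv ℝ ρ p) p :=
    (hasDerivAt_inv hr.ne').comp_hasFDerivAt p dρ
  have dlog : HasFDerivAt (fun q => Real.log (ρ q)) ((ρ p)⁻¹ • fderiv ℝ ρ p) p :=
    (Real.hasDerivAt_log hr.ne').comp_hasFDerivAt p dρ
  -- first derivatives of log rho give rho_u, rho_v
  have h1 := heq₁ p hp
  rw [pu_of_hasFDerivAt dlog] at h1
  simp only [ContinuousLinearMap.coe_smul', Pi.smul_apply, smul_eq_mul, pu] at h1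
  have h2 := heq₂ p hp
  rw [pv_of_hasFDerivAt dlog] at h2
  simp only [ContinuousLinearMap.coe_smul', Pi.smul_apply, smul_eq_mul, pv] at h2
  have hru : fderiv ℝ ρ p (1, 0) = -(2 * ρ p / Lam p) * fderiv ℝ h p (1, 0) := by
    field_simp at h1 ⊢
    linarith
  have hrv : fderiv ℝ ρ p (0, 1) = (2 * ρ p / Lam p) * fderiv ℝ h p (0, 1) := by
    field_simp at h2 ⊢
    linarith
  -- mixed derivative of h
  have hc1 : HasFDerivAt (fun q => -(2 / Lam q))
      (-((2:ℝ) • ((-(Lam p ^ 2)⁻¹) • fderiv ℝ Lam p))) p := by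
    simpa only [div_eq_mul_inv, Pi.neg_def] using (hinvL.const_mul (2:ℝ)).neg
  have hc2 : HasFDerivAt (fun q => (2:ℝ) / Lam q)
      ((2:ℝ) • ((-(Lam p ^ 2)⁻¹) • fderiv ℝ Lam p)) p := by
    simpa only [div_eq_mul_inv] using hinvL.const_mul (2:ℝ)
  have hG1 : HasFDerivAt (fun q => -(2 / Lam q) * pu h q)
      ((-(2 / Lam p)) • D1 + (pu h p) • (-((2:ℝ) • ((-(Lam p ^ 2)⁻¹) • fderiv ℝ Lam p)))) p :=
    hc1.mul hD1
  have hG2 : HasFDerivAt (fun q => (2 / Lam q) * pv h q)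
      ((2 / Lam p) • D2 + (pv h p) • ((2:ℝ) • ((-(Lam p ^ 2)⁻¹) • fderiv ℝ Lam p))) p :=
    hc2.mul hD2
  have e1 : pv (fun q => pu (fun q' => Real.log (ρ q')) q) p
      = pv (fun q => -(2 / Lam q) * pu h q) p :=
    pv_congr (Filter.eventuallyEq_of_mem hmem (fun q hq => heq₁ q hq))
  rw [pv_of_hasFDerivAt hE1, pv_of_hasFDerivAt hG1] at e1
  have e2 : pu (fun q => pv (fun q' => Real.log (ρ q')) q) p
      = pu (fun q => (2 / Lam q) * pv h q) p :=
    pu_congr (Filter.eventuallyEq_of_mem hmem (fun q hq => heq₂ q hq))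
  rw [pu_of_hasFDerivAt hE2, pu_of_hasFDerivAt hG2] at e2
  simp only [ContinuousLinearMap.add_apply, ContinuousLinearMap.coe_smul', Pi.smul_apply,
    ContinuousLinearMap.neg_apply, Pi.neg_apply, smul_eq_mul, pu, pv] at e1 e2
  have key := e1.symm.trans (hEsym.trans e2)
  rw [← hDsym] at key
  have hm : D1 (0, 1) =
      (fderiv ℝ Lam p (0, 1) * fderiv ℝ h p (1, 0)
        + fderiv ℝ Lam p (1, 0) * fderiv ℝ h p (0, 1)) / (2 * Lam p) := by
    rw [eq_div_iff (show (2 * Lam p) ≠ 0 by positivity)]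
    refine mul_left_cancel₀ (show Lam p ≠ 0 from hL.ne') ?_
    field_simp at key
    linear_combination (-Lam p) * key
  -- derivative of sqrt(rho/Lam)
  have hQ : HasFDerivAt (fun q => ρ q / Lam q)
      ((ρ p) • ((-(Lam p ^ 2)⁻¹) • fderiv ℝ Lam p) + (Lam p)⁻¹ • fderiv ℝ ρ p) p := by
    simpa only [div_eq_mul_inv, Pi.mul_def] using dρ.mul hinvL
  have hσ := hQ.sqrt hQpos.ne'
  have hT : HasFDerivAt (fun q => Lam q / ρ q)
      ((Lam p) • ((-(ρ p ^ 2)⁻¹) • fderiv ℝ ρ p) + (ρ p)⁻¹ • fderiv ℝ Lam p) p := by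
    simpa only [div_eq_mul_inv, Pi.mul_def] using dΛ.mul hinvρ
  have hφd := (hT.sqrt hTpos.ne').const_mul (1/2 : ℝ)
  -- values of the derivatives we need
  have hF1 := (hσ.const_mul (-2 : ℝ)).mul hD1
  have hF2 := (hσ.const_mul (-2 : ℝ)).mul hD2
  have R1L : pv Om₁ p = pv (fun q => -2 * Real.sqrt (ρ q / Lam q) * pu h q) p :=
    pv_congr (Filter.eventuallyEq_of_mem hmem (fun q hq => hOm₁ q hq))
  rw [pv_of_hasFDerivAt (f := fun q => -2 * Real.sqrt (ρ q / Lam q) * pu h q) hF1] at R1L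
  have R2L : pu Om₂ p = pu (fun q => -2 * Real.sqrt (ρ q / Lam q) * pv h q) p :=
    pu_congr (Filter.eventuallyEq_of_mem hmem (fun q hq => hOm₂ q hq))
  rw [pu_of_hasFDerivAt (f := fun q => -2 * Real.sqrt (ρ q / Lam q) * pv h q) hF2] at R2L
  have Rφu : pu φ p = pu (fun q => (1/2 : ℝ) * Real.sqrt (Lam q / ρ q)) p :=
    pu_congr (Filter.eventuallyEq_of_mem hmem (fun q hq => hφ q hq))
  rw [pu_of_hasFDerivAt hφd] at Rφu
  have Rφv : pv φ p = pv (fun q => (1/2 : ℝ) * Real.sqrt (Lam q / ρ q)) p :=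
    pv_congr (Filter.eventuallyEq_of_mem hmem (fun q hq => hφ q hq))
  rw [pv_of_hasFDerivAt hφd] at Rφv
  have ROmu : pu Om p = pu (fun q => -h q) p :=
    pu_congr (Filter.eventuallyEq_of_mem hmem (fun q hq => hOm q hq))
  rw [pu_of_hasFDerivAt (f := fun q => -h q) dh.neg] at ROmu
  have ROmv : pv Om p = pv (fun q => -h q) p :=
    pv_congr (Filter.eventuallyEq_of_mem hmem (fun q hq => hOm q hq))
  rw [pv_of_hasFDerivAt (f := fun q => -h q) dh.neg] at ROmv
  have RWu : pu W p = pu ρ p :=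
    pu_congr (Filter.eventuallyEq_of_mem hmem (fun q hq => hW q hq))
  rw [pu_of_hasFDerivAt dρ] at RWu
  have RWv : pv W p = pv ρ p :=
    pv_congr (Filter.eventuallyEq_of_mem hmem (fun q hq => hW q hq))
  rw [pv_of_hasFDerivAt dρ] at RWv
  simp only [ContinuousLinearMap.add_apply, ContinuousLinearMap.coe_smul', Pi.smul_apply,
    ContinuousLinearMap.neg_apply, Pi.neg_apply, smul_eq_mul, pu, pv] at R1L R2L Rφu Rφv ROmu ROmv RWu RWv
  -- sqrt facts
  have hts : Real.sqrt (Lam p / ρ p) = (Real.sqrt (ρ p / Lam p))⁻¹ := by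
    rw [show Lam p / ρ p = (ρ p / Lam p)⁻¹ by field_simp, Real.sqrt_inv]
  have hspos : 0 < Real.sqrt (ρ p / Lam p) := Real.sqrt_pos.mpr hQpos
  have hs2 : Real.sqrt (ρ p / Lam p) ^ 2 = ρ p / Lam p := Real.sq_sqrt hQpos.le
  rw [hts] at Rφu Rφv
  clear hF1 hF2 hσ hQ hT hφd hG1 hG2 hc1 hc2 hE1 hE2 hD1 hD2 hinvL hinvρ dlog dρ dΛ dh e1 e2 key h1 h2 hlog hEsym
  set s := Real.sqrt (ρ p / Lam p) with hsdef
  clear_value s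
  have hρs : ρ p = s ^ 2 * Lam p := by rw [hs2]; field_simp
  simp only [pu, pv]
  refine ⟨?_, ?_, ?_, ?_, ?_, ?_⟩
  · rw [R1L, hOm₂ p hp, hφ p hp, Rφu, hts]
    simp only [pu, pv]
    rw [← hsdef, hm, hru, hrv, hρs]
    field_simp [hspos.ne', hL.ne']
    ring
  · rw [R2L, hOm₁ p hp, hφ p hp, Rφv, hts]
    simp only [pu, pv]
    rw [← hsdef, ← hDsym, hm, hru, hrv, hρs]
    field_simp [hspos.ne', hL.ne']
    ring
  · rw [ROmu, hOm₁ p hp, hφ p hp, hts]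
    simp only [pu, pv]
    rw [← hsdef]
    field_simp [hspos.ne', hL.ne']
    try ring
  · rw [ROmv, hOm₂ p hp, hφ p hp, hts]
    simp only [pu, pv]
    rw [← hsdef]
    field_simp [hspos.ne', hL.ne']
    try ring
  · rw [RWu, hOm₁ p hp, hk₁ p hp, hφ p hp, hts, hru]
    simp only [pu, pv]
    rw [← hsdef, hρs]
    field_simp [hspos.ne', hL.ne']
  · rw [RWv, hOm₂ p hp, hk₂ p hp, hφ p hp, hts, hrv]
    simp only [pu, pv]
    rw [← hsdef, hρs]
    field_simp [hspos.ne', hL.ne']
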